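/- For every real number a ≥ 2, the graph of the sequence n ↦ ⌊n^a⌋ contains no arithmetic progression of length 3; that is, there do not exist positive integers d, e such that the three points (e, ⌊e^a⌋), (e+d, ⌊(e+d)^a⌋), (e+2d, ⌊(e+2d)^a⌋) form an arithmetic progression in ℕ², i.e., ⌊(e+2d)^a⌋ + ⌊e^a⌋ = 2⌊(e+d)^a⌋. -/
import Mathlib

lemma conv2 (p : ℝ) (hp : 1 ≤ p) (x y : ℝ) (hx : 0 ≤ x) (hy : 0 ≤ y) :
    2 * ((x + y) / 2) ^ p ≤ x ^ p + y ^ p := by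
  lift x to NNReal using hx
  lift y to NNReal using hy
  have h := NNReal.rpow_arith_mean_le_arith_mean2_rpow (1/2) (1/2) x y (add_halves 1) hp
  have h' : (((1/2 : NNReal) * x + 1/2 * y : NNReal) : ℝ) ^ p
      ≤ ((1/2 : NNReal) * x ^ p + 1/2 * y ^ p : NNReal) := by
    exact_mod_cast NNReal.coe_le_coe.mpr h
  push_cast at h'
  have e2 : (1/2 * (x:ℝ) + 1/2 * y) = (x + y)/2 := by ring
  rw [e2] at h'
  nlinarith [h', NNReal.coe_nonneg x]

lemma superadd (p : ℝ) (hp : 1 ≤ p) (x y : ℝ) (hx : 0 ≤ x) (hy : 0 ≤ y) :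
    x ^ p + y ^ p ≤ (x + y) ^ p := by
  lift x to NNReal using hx
  lift y to NNReal using hy
  exact_mod_cast NNReal.coe_le_coe.mpr (NNReal.add_rpow_le_rpow_add x y hp)

lemma sq_rpow (x : ℝ) (hx : 0 ≤ x) (a : ℝ) : (x ^ 2) ^ (a / 2) = x ^ a := by
  rw [← Real.rpow_natCast x 2, ← Real.rpow_mul hx]
  congr 1; ring

lemma key (a : ℝ) (ha : 2 ≤ a) (u d : ℝ) (hd : 1 ≤ d) (hdu : d ≤ u) :
    2 * u ^ a + 2 ≤ (u - d) ^ a + (u + d) ^ a := by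
  have hp : (1 : ℝ) ≤ a / 2 := by linarith
  have hx : (0:ℝ) ≤ u - d := by linarith
  have hy : (0:ℝ) ≤ u + d := by linarith
  have hu : (0:ℝ) ≤ u := by linarith
  have hd0 : (0:ℝ) ≤ d := by linarith
  have h1 : 2 * (((u-d)^2 + (u+d)^2) / 2) ^ (a/2) ≤ ((u-d)^2) ^ (a/2) + ((u+d)^2) ^ (a/2) :=
    conv2 (a/2) hp _ _ (sq_nonneg _) (sq_nonneg _)
  have h3 : ((u-d)^2 + (u+d)^2) / 2 = u^2 + d^2 := by ring
  have h4 : (u^2) ^ (a/2) + (d^2) ^ (a/2) ≤ (u^2 + d^2) ^ (a/2) :=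
    superadd (a/2) hp _ _ (sq_nonneg _) (sq_nonneg _)
  have h5 : (1:ℝ) ≤ d ^ a := Real.one_le_rpow hd (by linarith)
  rw [sq_rpow _ hx, sq_rpow _ hy] at h1
  rw [sq_rpow _ hu, sq_rpow _ hd0] at h4
  rw [h3] at h1
  linarith

theorem stmt_0 (a : ℝ) (ha : 2 ≤ a) :
    ¬ ∃ d e : ℕ, 0 < d ∧ 0 < e ∧
      ⌊((e : ℝ) + 2 * d) ^ a⌋ + ⌊(e : ℝ) ^ a⌋ = 2 * ⌊((e : ℝ) + d) ^ a⌋ := by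
  rintro ⟨d, e, hd, he, heq⟩
  have hd1 : (1:ℝ) ≤ (d:ℝ) := by exact_mod_cast hd
  have he1 : (1:ℝ) ≤ (e:ℝ) := by exact_mod_cast he
  set D := (d:ℝ); set E := (e:ℝ)
  have hkey := key a ha (E + D) D hd1 (by linarith)
  have hxy : E + D - D = E := by ring
  have hyy : E + D + D = E + 2 * D := by ring
  rw [hxy, hyy] at hkey
  have f1 : (E + 2 * D) ^ a - 1 < (⌊(E + 2 * D) ^ a⌋ : ℝ) := Int.sub_one_lt_floor _
  have f2 : E ^ a - 1 < (⌊E ^ a⌋ : ℝ) := Int.sub_one_lt_floor _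
  have f3 : ((⌊(E + D) ^ a⌋ : ℤ) : ℝ) ≤ (E + D) ^ a := Int.floor_le _
  have := congrArg (fun z : ℤ => (z : ℝ)) heq
  push_cast at this
  linarith
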